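/- Let Δ^{m-1}, Δ^{n-1} be standard simplices and f : Δ^{m-1} × Δ^{n-1} → ℝ jointly continuous. Define g(x,y) := sup { E_{X∼p}[f(X,y)] : p Borel probability measure on Δ^{m-1}, barycenter of p equals x }. Then g is jointly continuous on Δ^{m-1} × Δ^{n-1}. In particular, for each fixed y, g(·,y) is the concave hull of f(·,y) and is continuous on the simplex. -/

import Mathlib

open MeasureTheory Set


variable {m n : ℕ}

/-- A finite convex combination of Dirac measures gives an element of the defining set. -/
lemma combo_mem_aux {ι : Type} [Fintype ι]
    (f : ↥(stdSimplex ℝ (Fin m)) × ↥(stdSimplex ℝ (Fin n)) → ℝ) (hf : Continuous f)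
    (w : ι → ℝ) (hw0 : ∀ i, 0 ≤ w i) (hw1 : ∑ i, w i = 1)
    (z : ι → ↥(stdSimplex ℝ (Fin m))) (y : ↥(stdSimplex ℝ (Fin n)))
    (x : ↥(stdSimplex ℝ (Fin m))) (hx : (x : Fin m → ℝ) = ∑ i, w i • (z i : Fin m → ℝ)) :
    ∃ p : ProbabilityMeasure ↥(stdSimplex ℝ (Fin m)),
        (∫ ζ, (ζ : Fin m → ℝ) ∂(p : Measure ↥(stdSimplex ℝ (Fin m)))) = (x : Fin m → ℝ) ∧
        (∑ i, w i * f (z i, y)) = ∫ ζ, f (ζ, y) ∂(p : Measure ↥(stdSimplex ℝ (Fin m))) := by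
  haveI : CompactSpace ↥(stdSimplex ℝ (Fin m)) :=
    isCompact_iff_compactSpace.mp (isCompact_stdSimplex _ _)
  set μ : Measure ↥(stdSimplex ℝ (Fin m)) :=
    ∑ i : ι, ENNReal.ofReal (w i) • Measure.dirac (z i) with hμ
  have hprob : IsProbabilityMeasure μ := by
    constructor
    rw [hμ]
    rw [Measure.finset_sum_apply]
    simp only [Measure.smul_apply, Measure.dirac_apply_of_mem (mem_univ _), smul_eq_mul, mul_one]
    rw [← ENNReal.ofReal_sum_of_nonneg (fun i _ => hw0 i), hw1, ENNReal.ofReal_one]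
  have hint : ∀ {E : Type} [NormedAddCommGroup E] [NormedSpace ℝ E] [CompleteSpace E] [SecondCountableTopology E]
      (φ : ↥(stdSimplex ℝ (Fin m)) → E), Continuous φ →
      ∫ ζ, φ ζ ∂μ = ∑ i, w i • φ (z i) := by
    intro E _ _ _ _ φ hφ
    rw [hμ, integral_finset_sum_measure]
    · refine Finset.sum_congr rfl (fun i _ => ?_)
      rw [integral_smul_measure, integral_dirac, ENNReal.toReal_ofReal (hw0 i)]
    · intro i _
      refine Integrable.smul_measure ?_ ENNReal.ofReal_ne_top
      exact hφ.integrable_of_hasCompactSupport (HasCompactSupport.of_compactSpace _)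
  refine ⟨⟨μ, hprob⟩, ?_, ?_⟩
  · exact (hint _ continuous_subtype_val).trans hx.symm
  · have := hint (fun ζ => f (ζ, y)) (hf.comp (continuous_id.prodMk continuous_const))
    simp only [smul_eq_mul] at this
    exact this.symm


/-- Pad a finite convex combination to a fixed index size `Fin N`. -/
lemma pad_combo {α : Type} {N : ℕ} {ι : Type} [Fintype ι] (hcard : Fintype.card ι ≤ N)
    (w : ι → ℝ) (hw0 : ∀ i, 0 ≤ w i) (z : ι → α) (z₀ : α) :
    ∃ (w' : Fin N → ℝ) (z' : Fin N → α), (∀ j, 0 ≤ w' j) ∧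
      (∀ (F : Type) (_ : AddCommMonoid F) (_ : Module ℝ F) (G : α → F),
        ∑ j, w' j • G (z' j) = ∑ i, w i • G (z i)) := by
  have hcards : Fintype.card (ι ⊕ Fin (N - Fintype.card ι)) = N := by
    simp [Nat.add_sub_cancel' hcard]
  let σ : (ι ⊕ Fin (N - Fintype.card ι)) ≃ Fin N := Fintype.equivFinOfCardEq hcards
  refine ⟨(Sum.elim w 0) ∘ σ.symm, (Sum.elim z fun _ => z₀) ∘ σ.symm, ?_, ?_⟩
  · intro j
    rcases h : σ.symm j with i | i
    · simp [h, hw0 i]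
    · simp [h]
  · intro F _ _ G
    have hh := Fintype.sum_equiv σ
      (fun s => Sum.elim w 0 s • G (Sum.elim z (fun _ => z₀) s))
      (fun j => (Sum.elim w 0 ∘ σ.symm) j • G (((Sum.elim z fun _ => z₀) ∘ σ.symm) j))
      (by intro s; simp)
    rw [← hh]
    simp [Fintype.sum_sum_type]

/-- Carathéodory reduction: any finite convex combination on the simplex can be re-expressed
with exactly `m + 2` points, preserving barycenter and the value of `f (·, y)`. -/
lemma reduce_combo {m n : ℕ}
    (f : ↥(stdSimplex ℝ (Fin m)) × ↥(stdSimplex ℝ (Fin n)) → ℝ)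
    {ι : Type} [Fintype ι]
    (w : ι → ℝ) (hw0 : ∀ i, 0 ≤ w i) (hw1 : ∑ i, w i = 1)
    (z : ι → ↥(stdSimplex ℝ (Fin m))) (y : ↥(stdSimplex ℝ (Fin n))) :
    ∃ (w' : Fin (m + 2) → ℝ) (z' : Fin (m + 2) → ↥(stdSimplex ℝ (Fin m))),
      (∀ j, 0 ≤ w' j) ∧ (∑ j, w' j = 1) ∧
      (∑ j, w' j • (z' j : Fin m → ℝ)) = (∑ i, w i • (z i : Fin m → ℝ)) ∧
      (∑ j, w' j * f (z' j, y)) = (∑ i, w i * f (z i, y)) := by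
  classical
  set E := (Fin m → ℝ) × ℝ
  set Γ : Set E := Set.range (fun ζ : ↥(stdSimplex ℝ (Fin m)) => ((ζ : Fin m → ℝ), f (ζ, y)))
    with hΓ
  set pt : E := (∑ i, w i • (z i : Fin m → ℝ), ∑ i, w i * f (z i, y)) with hpt
  have hptmem : pt ∈ convexHull ℝ Γ := by
    have := Finset.centerMass_mem_convexHull (Finset.univ : Finset ι)
      (w := w) (fun i _ => hw0 i) (by rw [hw1]; exact one_pos)
      (z := fun i => (((z i : Fin m → ℝ)), f (z i, y))) (fun i _ => show (((z i : Fin m → ℝ)), f (z i, y)) ∈ Γ from ⟨z i, rfl⟩)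
    have hsp : ∑ i, w i • (((z i : Fin m → ℝ)), f (z i, y)) = pt := by
      rw [hpt, Prod.ext_iff]
      constructor
      · rw [Prod.fst_sum]
        exact Finset.sum_congr rfl (fun i _ => rfl)
      · rw [Prod.snd_sum]
        refine Finset.sum_congr rfl (fun i _ => ?_)
        simp [smul_eq_mul]
    rwa [Finset.centerMass_eq_of_sum_1 _ _ hw1, hsp] at this
  obtain ⟨ι', hfin, pts, w'', hrange, hai, hpos, hsum1, hrepr⟩ :=
    eq_pos_convex_span_of_mem_convexHull hptmem
  letI := hfin
  -- extract simplex points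
  have hζ : ∀ i : ι', ∃ ζ : ↥(stdSimplex ℝ (Fin m)), ((ζ : Fin m → ℝ), f (ζ, y)) = pts i := by
    intro i
    exact hrange (Set.mem_range_self i)
  choose ζ hζeq using hζ
  have hcard : Fintype.card ι' ≤ m + 2 := by
    have h1 := hai.card_le_finrank_succ
    have h2 : Module.finrank ℝ (vectorSpan ℝ (Set.range pts)) ≤ Module.finrank ℝ E :=
      Submodule.finrank_le _
    have h3 : Module.finrank ℝ E = m + 1 := by simp [E]
    rw [h3] at h2
    exact h1.trans (Nat.add_le_add_right h2 1)
  have hneι : Nonempty ι := by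
    by_contra h
    rw [not_nonempty_iff] at h
    rw [Finset.univ_eq_empty, Finset.sum_empty] at hw1
    exact one_ne_zero hw1.symm
  obtain ⟨w', z', hw'0, hsums⟩ :=
    pad_combo hcard w'' (fun i => (hpos i).le) ζ (z (Classical.arbitrary ι))
  have hfst : ∀ i : ι', ((ζ i : Fin m → ℝ)) = (pts i).1 := fun i => congrArg Prod.fst (hζeq i)
  have hsnd : ∀ i : ι', f (ζ i, y) = (pts i).2 := fun i => congrArg Prod.snd (hζeq i)
  refine ⟨w', z', hw'0, ?_, ?_, ?_⟩
  · have h1 := hsums ℝ inferInstance inferInstance (fun _ => (1 : ℝ))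
    simp only [smul_eq_mul, mul_one] at h1
    rw [h1]
    exact hsum1
  · have h1 := hsums (Fin m → ℝ) inferInstance inferInstance (fun ζ => (ζ : Fin m → ℝ))
    have h2 := congrArg Prod.fst hrepr
    rw [Prod.fst_sum] at h2
    rw [h1]
    simp only [hfst]
    exact h2
  · have h1 := hsums ℝ inferInstance inferInstance (fun ζ => f (ζ, y))
    simp only [smul_eq_mul] at h1
    have h2 := congrArg Prod.snd hrepr
    rw [Prod.snd_sum] at h2
    rw [h1]
    simp only [hsnd]
    exact h2


/-- Discretization: a probability measure on the simplex can be replaced by a finite convex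
combination with the same barycenter and almost the same integral of `f (·, y)`. -/
lemma discretize {m n : ℕ}
    (f : ↥(stdSimplex ℝ (Fin m)) × ↥(stdSimplex ℝ (Fin n)) → ℝ) (hf : Continuous f)
    (p : Measure ↥(stdSimplex ℝ (Fin m))) [hp : IsProbabilityMeasure p]
    (y : ↥(stdSimplex ℝ (Fin n))) {ε : ℝ} (hε : 0 < ε) :
    ∃ (M : ℕ) (w : Fin M → ℝ) (z : Fin M → ↥(stdSimplex ℝ (Fin m))),
      (∀ j, 0 ≤ w j) ∧ (∑ j, w j = 1) ∧
      ((∑ j, w j • ((z j : Fin m → ℝ))) = ∫ ζ, (ζ : Fin m → ℝ) ∂p) ∧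
      ∫ ζ, f (ζ, y) ∂p ≤ (∑ j, w j * f (z j, y)) + ε := by
  classical
  haveI : CompactSpace ↥(stdSimplex ℝ (Fin m)) :=
    isCompact_iff_compactSpace.mp (isCompact_stdSimplex _ _)
  haveI : CompactSpace ↥(stdSimplex ℝ (Fin n)) :=
    isCompact_iff_compactSpace.mp (isCompact_stdSimplex _ _)
  haveI hKne : Nonempty ↥(stdSimplex ℝ (Fin m)) := by
    by_contra h
    rw [not_nonempty_iff] at h
    have h1 := hp.measure_univ
    rw [Set.univ_eq_empty_iff.mpr h, measure_empty] at h1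
    exact zero_ne_one h1
  -- uniform continuity
  have hfu : UniformContinuous f := CompactSpace.uniformContinuous_of_continuous hf
  rw [Metric.uniformContinuous_iff] at hfu
  obtain ⟨δ, hδ, hδf⟩ := hfu ε hε
  -- finite cover by small balls
  obtain ⟨t, ht⟩ := isCompact_univ.elim_finite_subcover
    (fun c : ↥(stdSimplex ℝ (Fin m)) => Metric.ball c (δ/4)) (fun _ => Metric.isOpen_ball)
    (fun ξ _ => Set.mem_iUnion.2 ⟨ξ, Metric.mem_ball_self (by positivity)⟩)
  set M := t.card with hM
  set c : Fin M → ↥(stdSimplex ℝ (Fin m)) := fun j => (t.equivFin.symm j : _) with hc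
  set A : ℕ → Set ↥(stdSimplex ℝ (Fin m)) :=
    fun j => if h : j < M then Metric.ball (c ⟨j, h⟩) (δ/4) else ∅ with hA
  set B := disjointed A with hB
  have hBmeas : ∀ j, MeasurableSet (B j) := by
    refine fun j => MeasurableSet.disjointed (fun k => ?_) j
    rw [hA]
    dsimp only
    split
    · exact Metric.isOpen_ball.measurableSet
    · exact MeasurableSet.empty
  have hBdisj : Pairwise (Function.onFun Disjoint B) := disjoint_disjointed A
  have hBsub : ∀ j, B j ⊆ A j := fun j => disjointed_le A j
  have hBempty : ∀ j : ℕ, M ≤ j → B j = ∅ := by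
    intro j hj
    have := hBsub j
    rw [hA] at this
    simp only [dif_neg (not_lt.2 hj)] at this
    exact Set.subset_empty_iff.mp this
  have hBun : (⋃ j, B j) = Set.univ := by
    rw [hB, iUnion_disjointed]
    apply Set.eq_univ_of_univ_subset
    intro ξ hξ
    obtain ⟨c', hc', hball⟩ := Set.mem_iUnion₂.1 (ht (Set.mem_univ ξ))
    refine Set.mem_iUnion.2 ⟨(t.equivFin ⟨c', hc'⟩ : Fin M), ?_⟩
    rw [hA]
    dsimp only
    rw [dif_pos (t.equivFin ⟨c', hc'⟩).isLt]
    have : c ⟨(t.equivFin ⟨c', hc'⟩ : Fin M), (t.equivFin ⟨c', hc'⟩).isLt⟩ = c' := by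
      rw [hc]
      simp
    rwa [this]
  -- integrability
  have hintval : Integrable (fun ζ : ↥(stdSimplex ℝ (Fin m)) => (ζ : Fin m → ℝ)) p :=
    continuous_subtype_val.integrable_of_hasCompactSupport (HasCompactSupport.of_compactSpace _)
  have hintf : Integrable (fun ζ : ↥(stdSimplex ℝ (Fin m)) => f (ζ, y)) p :=
    (hf.comp (continuous_id.prodMk continuous_const)).integrable_of_hasCompactSupport
      (HasCompactSupport.of_compactSpace _)
  -- choice of representative points
  have hzex : ∀ jj : Fin M, ∃ zz : ↥(stdSimplex ℝ (Fin m)), p (B jj) ≠ 0 →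
      ((p (B jj)).toReal • (zz : Fin m → ℝ) = ∫ ζ in B (jj : ℕ), (ζ : Fin m → ℝ) ∂p ∧
       ∀ ζ ∈ B (jj : ℕ), dist zz ζ ≤ δ/2) := by
    intro jj
    by_cases h : p (B jj) = 0
    · exact ⟨Classical.arbitrary _, fun hc => absurd h hc⟩
    · set s := closure (convexHull ℝ (Subtype.val '' B (jj : ℕ))) with hs
      have hssub : s ⊆ stdSimplex ℝ (Fin m) := by
        apply closure_minimal ?_ (isClosed_stdSimplex _ _)
        apply convexHull_min ?_ (convex_stdSimplex ℝ _)
        rintro v ⟨ζ, _, rfl⟩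
        exact ζ.2
      have havg : (⨍ ζ in B (jj : ℕ), (ζ : Fin m → ℝ) ∂p) ∈ s := by
        apply (convex_convexHull ℝ _).closure.set_average_mem isClosed_closure h
          (measure_ne_top p _)
        · exact (ae_restrict_iff' (hBmeas jj)).2 (Filter.Eventually.of_forall
            (fun ζ hζ => subset_closure (subset_convexHull ℝ _ (Set.mem_image_of_mem _ hζ))))
        · exact hintval.integrableOn
      refine ⟨⟨_, hssub havg⟩, fun _ => ⟨?_, ?_⟩⟩
      · show (p (B (jj : ℕ))).toReal • (⨍ ζ in B (jj : ℕ), (ζ : Fin m → ℝ) ∂p) = _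
        rw [setAverage_eq]
        rw [measureReal_def, smul_inv_smul₀ (ENNReal.toReal_ne_zero.2 ⟨h, measure_ne_top p _⟩)]
      · intro ζ hζ
        have h1 : (ζ : Fin m → ℝ) ∈ s :=
          subset_closure (subset_convexHull ℝ _ (Set.mem_image_of_mem _ hζ))
        have hbd : Bornology.IsBounded s := ((isCompact_stdSimplex ℝ (Fin m)).isBounded).subset hssub
        have h2 := Metric.dist_le_diam_of_mem hbd havg h1
        have h3 : Metric.diam s ≤ δ/2 := by
          rw [hs, Metric.diam_closure, convexHull_diam]
          have h4 : Subtype.val '' B (jj : ℕ) ⊆ Metric.ball ((c jj : Fin m → ℝ)) (δ/4) := by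
            rintro v ⟨ζ', hζ', rfl⟩
            have h5 := hBsub _ hζ'
            rw [hA] at h5
            dsimp only at h5
            rw [dif_pos jj.isLt] at h5
            simp only [Fin.eta] at h5
            rw [Metric.mem_ball] at h5 ⊢
            rwa [Subtype.dist_eq] at h5
          calc Metric.diam (Subtype.val '' B (jj : ℕ))
              ≤ Metric.diam (Metric.ball ((c jj : Fin m → ℝ)) (δ/4)) :=
                Metric.diam_mono h4 Metric.isBounded_ball
            _ ≤ 2 * (δ/4) := Metric.diam_ball (by positivity)
            _ = δ/2 := by ring
        rw [Subtype.dist_eq]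
        exact h2.trans h3
  choose z hz using hzex
  set w : Fin M → ℝ := fun jj => (p (B (jj : ℕ))).toReal with hw
  have hw0 : ∀ jj, 0 ≤ w jj := fun jj => ENNReal.toReal_nonneg
  -- splitting integrals over the pieces
  have hsplit : ∀ {E : Type} [NormedAddCommGroup E] [NormedSpace ℝ E] [CompleteSpace E]
      (φ : ↥(stdSimplex ℝ (Fin m)) → E), Integrable φ p →
      ∫ ζ, φ ζ ∂p = ∑ jj : Fin M, ∫ ζ in B (jj : ℕ), φ ζ ∂p := by
    intro E _ _ _ φ hφ
    have h1 : ∫ ζ, φ ζ ∂p = ∫ ζ in ⋃ j, B j, φ ζ ∂p := by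
      rw [hBun, Measure.restrict_univ]
    rw [h1, integral_iUnion hBmeas hBdisj (by rw [hBun]; exact hφ.integrableOn)]
    rw [tsum_eq_sum (s := Finset.range M) (f := fun j => ∫ ζ in B j, φ ζ ∂p)
      (fun j hj => by
        rw [hBempty j (by simpa using hj), Measure.restrict_empty, integral_zero_measure])]
    rw [← Fin.sum_univ_eq_sum_range (fun j => ∫ ζ in B j, φ ζ ∂p) M]
  -- sum of the weights
  have hw1 : ∑ jj, w jj = 1 := by
    have h1 : p Set.univ = ∑' (j : ℕ), p (B j) := by
      rw [← hBun]
      exact measure_iUnion hBdisj hBmeas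
    rw [hp.measure_univ] at h1
    rw [tsum_eq_sum (s := Finset.range M) (f := fun j => p (B j))
      (fun j hj => by rw [hBempty j (by simpa using hj), measure_empty])] at h1
    have h2 := congrArg ENNReal.toReal h1
    rw [ENNReal.toReal_one, ENNReal.toReal_sum (fun j _ => measure_ne_top p _)] at h2
    rw [hw]
    rw [← Fin.sum_univ_eq_sum_range (fun j => (p (B j)).toReal) M] at h2
    exact h2.symm
  refine ⟨M, w, z, hw0, hw1, ?_, ?_⟩
  · rw [hsplit (fun ζ => (ζ : Fin m → ℝ)) hintval]
    refine Finset.sum_congr rfl (fun jj _ => ?_)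
    by_cases h : p (B (jj : ℕ)) = 0
    · rw [hw]
      dsimp only
      rw [h, ENNReal.toReal_zero, zero_smul, Measure.restrict_eq_zero.2 h, integral_zero_measure]
    · exact (hz jj h).1
  · rw [hsplit (fun ζ => f (ζ, y)) hintf]
    have hterm : ∀ jj : Fin M, ∫ ζ in B (jj : ℕ), f (ζ, y) ∂p ≤ w jj * f (z jj, y) + w jj * ε := by
      intro jj
      by_cases h : p (B (jj : ℕ)) = 0
      · rw [Measure.restrict_eq_zero.2 h, integral_zero_measure, hw]
        dsimp only
        rw [h, ENNReal.toReal_zero]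
        simp
      · have hpt : ∀ ζ ∈ B (jj : ℕ), f (ζ, y) ≤ f (z jj, y) + ε := by
          intro ζ hζ
          have hd := (hz jj h).2 ζ hζ
          have hdist : dist ((ζ : ↥(stdSimplex ℝ (Fin m))), y) (((z jj) : ↥(stdSimplex ℝ (Fin m))), y) < δ := by
            rw [Prod.dist_eq]
            simp only [dist_self]
            rw [max_eq_left dist_nonneg]
            calc dist ζ (z jj) = dist (z jj) ζ := dist_comm _ _
              _ ≤ δ/2 := hd
              _ < δ := by linarith
          have h6 := hδf hdist
          rw [Real.dist_eq] at h6
          have h7 := abs_lt.1 h6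
          linarith [h7.1]
        calc ∫ ζ in B (jj : ℕ), f (ζ, y) ∂p
            ≤ ∫ _ζ in B (jj : ℕ), (f (z jj, y) + ε) ∂p :=
              setIntegral_mono_on hintf.integrableOn
                (integrableOn_const (measure_ne_top p _)) (hBmeas jj) hpt
          _ = (p (B (jj : ℕ))).toReal • (f (z jj, y) + ε) := by rw [setIntegral_const, measureReal_def]
          _ = w jj * f (z jj, y) + w jj * ε := by
              rw [hw]
              dsimp only
              rw [smul_eq_mul]
              ring
    calc ∑ jj : Fin M, ∫ ζ in B (jj : ℕ), f (ζ, y) ∂p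
        ≤ ∑ jj : Fin M, (w jj * f (z jj, y) + w jj * ε) :=
          Finset.sum_le_sum (fun jj _ => hterm jj)
      _ = (∑ jj, w jj * f (z jj, y)) + (∑ jj, w jj) * ε := by
          rw [Finset.sum_add_distrib, Finset.sum_mul]
      _ = (∑ jj, w jj * f (z jj, y)) + ε := by rw [hw1, one_mul]


/-- Move the barycenter from `x` to a nearby `x'` by mixing with a single point `v`. -/
lemma nearby_point {m : ℕ} (x x' : ↥(stdSimplex ℝ (Fin m)))
    (δ₀ : ℝ) (hδ₀ : 0 < δ₀)
    (hδx : ∀ i, 0 < (x : Fin m → ℝ) i → δ₀ ≤ (x : Fin m → ℝ) i)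
    (hclose : dist (x' : Fin m → ℝ) (x : Fin m → ℝ) ≤ δ₀) :
    ∃ (t : ℝ) (v : ↥(stdSimplex ℝ (Fin m))), 0 ≤ t ∧ t ≤ 1 ∧
      t ≤ Real.sqrt (dist (x' : Fin m → ℝ) (x : Fin m → ℝ) / δ₀) ∧
      (1 - t) • (x : Fin m → ℝ) + t • (v : Fin m → ℝ) = (x' : Fin m → ℝ) := by
  by_cases hxx : (x' : Fin m → ℝ) = (x : Fin m → ℝ)
  · exact ⟨0, x, le_refl 0, zero_le_one, Real.sqrt_nonneg _, by rw [hxx]; simp⟩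
  · set r := dist (x' : Fin m → ℝ) (x : Fin m → ℝ) with hr
    have hrpos : 0 < r := dist_pos.2 hxx
    set t := Real.sqrt (r / δ₀) with ht
    have htpos : 0 < t := Real.sqrt_pos.2 (by positivity)
    have ht1 : t ≤ 1 := Real.sqrt_le_one.2 (by rw [div_le_one hδ₀]; exact hclose)
    have hkey : t⁻¹ * r ≤ δ₀ := by
      have h1 : t⁻¹ = Real.sqrt (δ₀ / r) := by
        rw [ht, ← Real.sqrt_inv]
        congr 1
        field_simp
      have h2 : t⁻¹ * r = Real.sqrt (δ₀ * r) := by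
        rw [h1, ← Real.sqrt_sq hrpos.le, ← Real.sqrt_mul (by positivity)]
        congr 1
        field_simp
        rw [Real.sq_sqrt (by positivity)]
      rw [h2]
      calc Real.sqrt (δ₀ * r) ≤ Real.sqrt (δ₀ * δ₀) :=
            Real.sqrt_le_sqrt (mul_le_mul_of_nonneg_left hclose hδ₀.le)
        _ = δ₀ := Real.sqrt_mul_self hδ₀.le
    set vv : Fin m → ℝ := fun i => (x : Fin m → ℝ) i + t⁻¹ * ((x' : Fin m → ℝ) i - (x : Fin m → ℝ) i)
      with hvv
    have hcoord : ∀ i, |(x' : Fin m → ℝ) i - (x : Fin m → ℝ) i| ≤ r := by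
      intro i
      rw [← Real.dist_eq]
      exact dist_le_pi_dist _ _ i
    have hmem : vv ∈ stdSimplex ℝ (Fin m) := by
      constructor
      · intro i
        rcases (x.2.1 i).lt_or_eq with hxi | hxi
        · have h3 : δ₀ ≤ (x : Fin m → ℝ) i := hδx i hxi
          have h4 : -(t⁻¹ * r) ≤ t⁻¹ * ((x' : Fin m → ℝ) i - (x : Fin m → ℝ) i) := by
            rw [neg_le, ← mul_neg]
            apply mul_le_mul_of_nonneg_left _ (by positivity)
            have := (abs_le.1 (hcoord i)).1
            linarith
          rw [hvv]
          dsimp only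
          linarith
        · rw [hvv]
          dsimp only
          rw [show (x : Fin m → ℝ) i = 0 from hxi.symm]
          have := stdSimplex.zero_le x' i
          have h5 : 0 ≤ t⁻¹ * ((x' : Fin m → ℝ) i - 0) := by
            apply mul_nonneg (by positivity)
            linarith
          linarith
      · rw [hvv]
        rw [Finset.sum_add_distrib, ← Finset.mul_sum]
        have hx1 : ∑ i, (x : Fin m → ℝ) i = 1 := x.2.2
        have hx'1 : ∑ i, (x' : Fin m → ℝ) i = 1 := x'.2.2
        rw [Finset.sum_sub_distrib, hx1, hx'1]
        ring
    refine ⟨t, ⟨vv, hmem⟩, htpos.le, ht1, le_refl _, ?_⟩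
    funext i
    show ((1 - t) • (x : Fin m → ℝ) + t • vv) i = (x' : Fin m → ℝ) i
    simp only [Pi.add_apply, Pi.smul_apply, smul_eq_mul, hvv]
    field_simp
    ring

open MeasureTheory

set_option maxHeartbeats 4000000 in
theorem stmt_12 (m n : ℕ)
    (f : ↥(stdSimplex ℝ (Fin m)) × ↥(stdSimplex ℝ (Fin n)) → ℝ)
    (hf : Continuous f) :
    Continuous (fun xy : ↥(stdSimplex ℝ (Fin m)) × ↥(stdSimplex ℝ (Fin n)) =>
      sSup {rr : ℝ | ∃ p : ProbabilityMeasure ↥(stdSimplex ℝ (Fin m)),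
        (∫ z, (z : Fin m → ℝ) ∂(p : Measure ↥(stdSimplex ℝ (Fin m)))) = (xy.1 : Fin m → ℝ) ∧
        rr = ∫ z, f (z, xy.2) ∂(p : Measure ↥(stdSimplex ℝ (Fin m)))}) := by
  classical
  haveI : CompactSpace ↥(stdSimplex ℝ (Fin m)) :=
    isCompact_iff_compactSpace.mp (isCompact_stdSimplex _ _)
  haveI : CompactSpace ↥(stdSimplex ℝ (Fin n)) :=
    isCompact_iff_compactSpace.mp (isCompact_stdSimplex _ _)
  set S : ↥(stdSimplex ℝ (Fin m)) × ↥(stdSimplex ℝ (Fin n)) → Set ℝ :=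
    fun xy => {rr : ℝ | ∃ p : ProbabilityMeasure ↥(stdSimplex ℝ (Fin m)),
        (∫ z, (z : Fin m → ℝ) ∂(p : Measure ↥(stdSimplex ℝ (Fin m)))) = (xy.1 : Fin m → ℝ) ∧
        rr = ∫ z, f (z, xy.2) ∂(p : Measure ↥(stdSimplex ℝ (Fin m)))} with hS
  set g : ↥(stdSimplex ℝ (Fin m)) × ↥(stdSimplex ℝ (Fin n)) → ℝ := fun xy => sSup (S xy) with hg
  show Continuous g
  -- a uniform bound on f
  set F := BoundedContinuousFunction.mkOfCompact (⟨f, hf⟩ :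
    C(↥(stdSimplex ℝ (Fin m)) × ↥(stdSimplex ℝ (Fin n)), ℝ)) with hF
  set C := ‖F‖ with hCdef
  have hC0 : 0 ≤ C := norm_nonneg F
  have hCf : ∀ u, |f u| ≤ C := by
    intro u
    have h1 := F.norm_coe_le_norm u
    rwa [Real.norm_eq_abs] at h1
  -- bound on elements of S
  have hSbd : ∀ xy, ∀ rr ∈ S xy, |rr| ≤ C := by
    rintro xy rr ⟨p, _, hval⟩
    haveI := p.2
    rw [hval, ← Real.norm_eq_abs]
    calc ‖∫ z, f (z, xy.2) ∂(p : Measure ↥(stdSimplex ℝ (Fin m)))‖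
        ≤ C * ((p : Measure ↥(stdSimplex ℝ (Fin m))) Set.univ).toReal :=
          norm_integral_le_of_norm_le_const
            (Filter.Eventually.of_forall (fun z => by rw [Real.norm_eq_abs]; exact hCf _))
      _ = C := by rw [measure_univ, ENNReal.toReal_one, mul_one]
  have hSbdd : ∀ xy, BddAbove (S xy) :=
    fun xy => ⟨C, fun rr h => (abs_le.1 (hSbd xy rr h)).2⟩
  have hSmem : ∀ (xy : ↥(stdSimplex ℝ (Fin m)) × ↥(stdSimplex ℝ (Fin n)))
      {ι : Type} [Fintype ι] (w : ι → ℝ), (∀ i, 0 ≤ w i) → (∑ i, w i) = 1 →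
      ∀ (z : ι → ↥(stdSimplex ℝ (Fin m))),
      ((xy.1 : Fin m → ℝ) = ∑ i, w i • (z i : Fin m → ℝ)) →
      (∑ i, w i * f (z i, xy.2)) ∈ S xy := by
    intro xy ι _ w hw0 hw1 z hb
    obtain ⟨p, h1, h2⟩ := combo_mem_aux f hf w hw0 hw1 z xy.2 xy.1 hb
    exact ⟨p, h1, h2⟩
  have hSne : ∀ xy, (S xy).Nonempty := by
    intro xy
    refine ⟨_, hSmem xy (ι := Fin 1) (fun _ => 1) (fun _ => zero_le_one) (by simp)
      (fun _ => xy.1) (by simp)⟩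
  rw [continuous_iff_continuousAt]
  rintro ⟨x, y⟩
  refine Metric.tendsto_nhds.mpr ?_
  intro ε hε
  have hupper : ∀ᶠ xy in nhds (x, y), g xy - g (x, y) < ε := by
    by_contra hcon
    rw [Filter.not_eventually] at hcon
    have hcon' : ∃ᶠ xy in nhds (x, y), g (x, y) + ε ≤ g xy :=
      hcon.mono (fun xy hxy => by push_neg at hxy; linarith)
    obtain ⟨u, hu_t, hu⟩ := Filter.exists_seq_forall_of_frequently hcon'
    have hcombo : ∀ k, ∃ (w : Fin (m + 2) → ℝ) (z : Fin (m + 2) → ↥(stdSimplex ℝ (Fin m))),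
        (∀ i, 0 ≤ w i) ∧ (∑ i, w i = 1) ∧
        ((∑ i, w i • (z i : Fin m → ℝ)) = ((u k).1 : Fin m → ℝ)) ∧
        g (x, y) + ε/2 ≤ ∑ i, w i * f (z i, (u k).2) := by
      intro k
      obtain ⟨r, hrS, hr⟩ := exists_lt_of_lt_csSup (hSne (u k))
        (show g (u k) - ε/4 < g (u k) by linarith)
      obtain ⟨p, hbar, hval⟩ := hrS
      haveI := p.2
      obtain ⟨M, w₁, z₁, h10, h11, h1b, h1v⟩ :=
        discretize f hf (p : Measure _) (u k).2 (show (0:ℝ) < ε/4 by linarith)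
      obtain ⟨w₂, z₂, h20, h21, h2b, h2v⟩ := reduce_combo f w₁ h10 h11 z₁ (u k).2
      refine ⟨w₂, z₂, h20, h21, by rw [h2b, h1b, hbar], ?_⟩
      rw [h2v]
      rw [hval] at hr
      have h6 := hu k
      linarith [h1v]
    choose wseq zseq hw0s hw1s hbs hvs using hcombo
    have hT : IsCompact ((stdSimplex ℝ (Fin (m + 2))) ×ˢ
        (Set.univ : Set (Fin (m + 2) → ↥(stdSimplex ℝ (Fin m))))) :=
      (isCompact_stdSimplex _ _).prod isCompact_univ
    have hmemT : ∀ k, (wseq k, zseq k) ∈ (stdSimplex ℝ (Fin (m + 2))) ×ˢ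
        (Set.univ : Set (Fin (m + 2) → ↥(stdSimplex ℝ (Fin m)))) :=
      fun k => ⟨⟨hw0s k, hw1s k⟩, Set.mem_univ _⟩
    obtain ⟨σl, hσT, φ, hφmono, hφtend⟩ :=
      hT.tendsto_subseq (x := fun k => (wseq k, zseq k)) hmemT
    have hcont_b : Continuous (fun σp : (Fin (m + 2) → ℝ) × (Fin (m + 2) → ↥(stdSimplex ℝ (Fin m))) =>
        ∑ i, σp.1 i • ((σp.2 i : Fin m → ℝ))) := by
      refine continuous_finset_sum _ (fun i _ => ?_)
      exact ((continuous_apply i).comp continuous_fst).smul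
        (((continuous_apply i).comp continuous_snd).subtype_val)
    have hxlim : Filter.Tendsto (fun j => ((u (φ j)).1 : Fin m → ℝ)) Filter.atTop
        (nhds (x : Fin m → ℝ)) :=
      ((continuous_subtype_val.comp continuous_fst).tendsto (x, y)).comp
        (hu_t.comp hφmono.tendsto_atTop)
    have hblim : Filter.Tendsto
        (fun j => ∑ i, (wseq (φ j)) i • ((zseq (φ j) i : Fin m → ℝ))) Filter.atTop
        (nhds (∑ i, σl.1 i • ((σl.2 i : Fin m → ℝ)))) :=
      (hcont_b.tendsto σl).comp hφtend
    have hbeq : (∑ i, σl.1 i • ((σl.2 i : Fin m → ℝ))) = (x : Fin m → ℝ) := by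
      refine tendsto_nhds_unique ?_ hxlim
      have h7 : (fun j => ∑ i, (wseq (φ j)) i • ((zseq (φ j) i : Fin m → ℝ)))
          = fun j => ((u (φ j)).1 : Fin m → ℝ) := funext (fun j => hbs (φ j))
      rwa [h7] at hblim
    have hcont_v : Continuous (fun q : ((Fin (m + 2) → ℝ) ×
        (Fin (m + 2) → ↥(stdSimplex ℝ (Fin m)))) × ↥(stdSimplex ℝ (Fin n)) =>
        ∑ i, q.1.1 i * f (q.1.2 i, q.2)) := by
      refine continuous_finset_sum _ (fun i _ => ?_)
      refine ((continuous_apply i).comp (continuous_fst.comp continuous_fst)).mul ?_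
      exact hf.comp ((((continuous_apply i).comp (continuous_snd.comp continuous_fst))).prodMk
        continuous_snd)
    have hylim : Filter.Tendsto (fun j => (u (φ j)).2) Filter.atTop (nhds y) :=
      (continuous_snd.tendsto (x, y)).comp (hu_t.comp hφmono.tendsto_atTop)
    have hqlim : Filter.Tendsto (fun j => ((wseq (φ j), zseq (φ j)), (u (φ j)).2)) Filter.atTop
        (nhds (σl, y)) := hφtend.prodMk_nhds hylim
    have hvlim : Filter.Tendsto
        (fun j => ∑ i, wseq (φ j) i * f (zseq (φ j) i, (u (φ j)).2)) Filter.atTop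
        (nhds (∑ i, σl.1 i * f (σl.2 i, y))) := (hcont_v.tendsto _).comp hqlim
    have hVlb : g (x, y) + ε/2 ≤ ∑ i, σl.1 i * f (σl.2 i, y) :=
      ge_of_tendsto' hvlim (fun j => hvs (φ j))
    have hVmem : (∑ i, σl.1 i * f (σl.2 i, y)) ∈ S (x, y) :=
      hSmem (x, y) σl.1 hσT.1.1 hσT.1.2 σl.2 hbeq.symm
    have h8 := le_csSup (hSbdd (x, y)) hVmem
    linarith

  have hlower : ∀ᶠ xy in nhds (x, y), g (x, y) - g xy < ε := by
    obtain ⟨r₀, hr₀S, hr₀⟩ := exists_lt_of_lt_csSup (hSne (x, y))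
      (show g (x, y) - ε/4 < g (x, y) by linarith)
    obtain ⟨p, hbar, hval⟩ := hr₀S
    haveI := p.2
    obtain ⟨M, w, z, hw0, hw1, hbar', hval'⟩ :=
      discretize f hf (p : Measure _) y (show (0:ℝ) < ε/4 by linarith)
    have hbarx : (∑ j, w j • (z j : Fin m → ℝ)) = (x : Fin m → ℝ) := by
      rw [hbar']; exact hbar
    rw [hval] at hr₀
    have hv₁ : g (x, y) - ε/2 < ∑ j, w j * f (z j, y) := by linarith
    have hex : ∃ i, 0 < (x : Fin m → ℝ) i := by
      by_contra hcon
      push_neg at hcon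
      have h1 : ∀ i, (x : Fin m → ℝ) i = 0 := fun i => le_antisymm (hcon i) (x.2.1 i)
      have h2 : (1:ℝ) = 0 := by
        rw [← stdSimplex.sum_eq_one x, Finset.sum_congr rfl (fun i _ => h1 i), Finset.sum_const_zero]
      norm_num at h2
    set Ifin := Finset.univ.filter (fun i => 0 < (x : Fin m → ℝ) i) with hIfin
    have hIne : ((Ifin).image (fun i => (x : Fin m → ℝ) i)).Nonempty := by
      obtain ⟨i, hi⟩ := hex
      exact ⟨_, Finset.mem_image_of_mem _ (Finset.mem_filter.2 ⟨Finset.mem_univ i, hi⟩)⟩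
    set δ₀ := (Ifin.image (fun i => (x : Fin m → ℝ) i)).min' hIne with hδ₀def
    have hδ₀ : 0 < δ₀ := by
      obtain ⟨i, hi, hieq⟩ := Finset.mem_image.1 ((Ifin.image _).min'_mem hIne)
      rw [hδ₀def, ← hieq]
      exact (Finset.mem_filter.1 hi).2
    have hδx : ∀ i, 0 < (x : Fin m → ℝ) i → δ₀ ≤ (x : Fin m → ℝ) i := fun i hi =>
      Finset.min'_le _ _ (Finset.mem_image_of_mem _ (Finset.mem_filter.2 ⟨Finset.mem_univ i, hi⟩))
    set hcomb : ↥(stdSimplex ℝ (Fin n)) → ℝ := fun y' => ∑ j, w j * f (z j, y') with hhcomb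
    have hhc : Continuous hcomb := continuous_finset_sum _
      (fun j _ => continuous_const.mul (hf.comp (continuous_const.prodMk continuous_id)))
    have habs : ∀ y', |hcomb y'| ≤ C := by
      intro y'
      calc |hcomb y'| ≤ ∑ j, |w j * f (z j, y')| := Finset.abs_sum_le_sum_abs _ _
        _ ≤ ∑ j, w j * C := by
            refine Finset.sum_le_sum (fun j _ => ?_)
            rw [abs_mul, abs_of_nonneg (hw0 j)]
            exact mul_le_mul_of_nonneg_left (hCf _) (hw0 j)
        _ = C := by rw [← Finset.sum_mul, hw1, one_mul]
    have hhy : ∀ᶠ y' in nhds y, |hcomb y' - hcomb y| < ε/8 := by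
      have h1 := Metric.tendsto_nhds.mp (hhc.tendsto y) (ε/8) (by linarith)
      refine h1.mono (fun y' hy' => ?_)
      rwa [Real.dist_eq] at hy'
    set τ := ε/(8*(C+1)) with hτ
    have hτ0 : 0 < τ := by positivity
    have hτC : τ * (2*C) ≤ ε/4 := by
      rw [hτ, div_mul_eq_mul_div, div_le_div_iff₀ (by positivity) (by norm_num : (0:ℝ) < 4)]
      nlinarith [hε.le, hC0]
    set ρ := min δ₀ (δ₀ * τ^2) with hρ
    have hρ0 : 0 < ρ := lt_min hδ₀ (by positivity)
    have e1 : ∀ᶠ xy' in nhds (x, y),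
        dist (xy'.1 : ↥(stdSimplex ℝ (Fin m))) x < ρ :=
      (continuous_fst.tendsto (x, y)).eventually (Metric.ball_mem_nhds x hρ0)
    have e2 : ∀ᶠ xy' in nhds (x, y), |hcomb xy'.2 - hcomb y| < ε/8 :=
      (continuous_snd.tendsto (x, y)).eventually hhy
    filter_upwards [e1, e2] with xy' hd hy'
    obtain ⟨x', y'⟩ := xy'
    simp only at hd hy'
    have hdist : dist (x' : Fin m → ℝ) (x : Fin m → ℝ) ≤ δ₀ := by
      rw [show dist (x' : Fin m → ℝ) (x : Fin m → ℝ) = dist x' x from (Subtype.dist_eq x' x).symm]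
      exact le_of_lt (lt_of_lt_of_le hd (min_le_left _ _))
    obtain ⟨t, v, ht0, ht1, htle, hbarv⟩ := nearby_point x x' δ₀ hδ₀ hδx hdist
    have htτ : t ≤ τ := by
      refine htle.trans ?_
      have h1 : dist (x' : Fin m → ℝ) (x : Fin m → ℝ) / δ₀ ≤ τ^2 := by
        rw [div_le_iff₀ hδ₀]
        have h2 : dist (x' : Fin m → ℝ) (x : Fin m → ℝ) < δ₀ * τ^2 := by
          rw [show dist (x' : Fin m → ℝ) (x : Fin m → ℝ) = dist x' x from (Subtype.dist_eq x' x).symm]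
          exact lt_of_lt_of_le hd (min_le_right _ _)
        linarith
      calc Real.sqrt (dist (x' : Fin m → ℝ) (x : Fin m → ℝ) / δ₀)
          ≤ Real.sqrt (τ^2) := Real.sqrt_le_sqrt h1
        _ = τ := Real.sqrt_sq hτ0.le
    set w₂ : Fin M ⊕ Unit → ℝ := Sum.elim (fun j => (1 - t) * w j) (fun _ => t) with hw₂
    set z₂ : Fin M ⊕ Unit → ↥(stdSimplex ℝ (Fin m)) := Sum.elim z (fun _ => v) with hz₂
    have hw₂0 : ∀ i, 0 ≤ w₂ i := by
      rintro (j | j)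
      · exact mul_nonneg (by linarith) (hw0 j)
      · exact ht0
    have hw₂1 : ∑ i, w₂ i = 1 := by
      rw [hw₂, Fintype.sum_sum_type]
      simp only [Sum.elim_inl, Sum.elim_inr, Fintype.sum_unique]
      rw [← Finset.mul_sum, hw1]
      ring
    have hb₂ : ((x' : Fin m → ℝ)) = ∑ i, w₂ i • (z₂ i : Fin m → ℝ) := by
      rw [hw₂, hz₂, Fintype.sum_sum_type]
      simp only [Sum.elim_inl, Sum.elim_inr, Fintype.sum_unique]
      have h3 : ∀ j : Fin M, ((1 - t) * w j) • ((z j : Fin m → ℝ))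
          = (1 - t) • (w j • ((z j : Fin m → ℝ))) := fun j => by rw [smul_smul]
      rw [Finset.sum_congr rfl (fun j _ => h3 j), ← Finset.smul_sum, hbarx]
      exact hbarv.symm
    have hVeq : (∑ i, w₂ i * f (z₂ i, y')) = (1 - t) * hcomb y' + t * f (v, y') := by
      rw [hw₂, hz₂, Fintype.sum_sum_type]
      simp only [Sum.elim_inl, Sum.elim_inr, Fintype.sum_unique]
      rw [hhcomb]
      rw [Finset.mul_sum]
      congr 1
      refine Finset.sum_congr rfl (fun j _ => ?_)
      ring
    have hVmem := hSmem (x', y') w₂ hw₂0 hw₂1 z₂ hb₂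
    have hle := le_csSup (hSbdd (x', y')) hVmem
    have hfv : |f (v, y')| ≤ C := hCf _
    have hhy'C : |hcomb y'| ≤ C := habs y'
    have hA : -(2*C) ≤ f (v, y') - hcomb y' := by
      have := abs_le.1 hfv
      have := abs_le.1 hhy'C
      linarith [(abs_le.1 hfv).1, (abs_le.1 hhy'C).2]
    have hB : t * (-(2*C)) ≤ t * (f (v, y') - hcomb y') :=
      mul_le_mul_of_nonneg_left hA ht0
    have hCt : t * (2*C) ≤ τ * (2*C) :=
      mul_le_mul_of_nonneg_right htτ (by positivity)
    have hVlb : g (x, y) - ε < ∑ i, w₂ i * f (z₂ i, y') := by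
      rw [hVeq]
      have h4 : (1 - t) * hcomb y' + t * f (v, y')
          = hcomb y' + t * (f (v, y') - hcomb y') := by ring
      rw [h4]
      have h5 := abs_sub_lt_iff.1 hy'
      linarith [h5.2]
    linarith [hle, hVlb]

  filter_upwards [hupper, hlower] with xy h1 h2
  rw [Real.dist_eq, abs_sub_lt_iff]
  exact ⟨h1, h2⟩
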